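/- Let E be a topological graph and let μ ∈ E^* be a finite path. Then s(μ) ∈ E_sg^0 (i.e., μ ∈ ∂E) if and only if μ is a Yeend boundary path (μ ∈ ∂_Y E). -/

import Mathlib

open Set Topology Filter

namespace TopGraphPaper

variable {V E : Type*}

/-- The set `E^0_fin` of vertices with a neighborhood whose closure has compact `r`-preimage. -/
def Vfin [TopologicalSpace V] [TopologicalSpace E] (r : E → V) : Set V :=
  {v | ∃ N : Set V, IsOpen N ∧ v ∈ N ∧ IsCompact (r ⁻¹' closure N)}

/-- The set `E^0_sce` of sources. -/
def Vsce [TopologicalSpace V] (r : E → V) : Set V := (closure (Set.range r))ᶜ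

/-- The set `E^0_rg` of regular vertices. -/
def Vrg [TopologicalSpace V] [TopologicalSpace E] (r : E → V) : Set V :=
  Vfin r \ closure (Vsce r)

/-- The set `E^0_sg` of singular vertices. -/
def Vsg [TopologicalSpace V] [TopologicalSpace E] (r : E → V) : Set V := (Vrg r)ᶜ

/-- Compatibility condition defining a finite path: the source of each edge is the
range of the next one. -/
def IsPath (r s : E → V) {n : ℕ} (μ : Fin n → E) : Prop :=
  ∀ (i : ℕ) (h : i + 1 < n), s (μ ⟨i, by omega⟩) = r (μ ⟨i + 1, h⟩)

/-- The space `E^n` of paths of length `n` (`n ≥ 1`), topologized as a subspace of `(E^1)^n`. -/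
abbrev PathSpace (r s : E → V) (n : ℕ) := {μ : Fin n → E // IsPath r s μ}

/-- The finite-path space `E^* = ⨿ₙ E^n`: a path of length `0` is a vertex, and a path of
positive length `n+1` lives in `PathSpace r s (n+1)`.  It carries the disjoint-union
topology. -/
abbrev FinPaths (r s : E → V) := V ⊕ (Σ n : ℕ, PathSpace r s (n + 1))

/-- The infinite-path space `E^∞`. -/
abbrev InfPaths (r s : E → V) := {μ : ℕ → E // ∀ i, s (μ i) = r (μ (i + 1))}

/-- The range of a finite path. -/
def finRng (r s : E → V) : FinPaths r s → V :=
  Sum.elim id fun x => r (x.2.1 0)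

/-- The source of a finite path. -/
def finSrc (r s : E → V) : FinPaths r s → V :=
  Sum.elim id fun x => s (x.2.1 (Fin.last x.1))

/-- The length of a finite path. -/
def finLen (r s : E → V) : FinPaths r s → ℕ :=
  Sum.elim (fun _ => 0) fun x => x.1 + 1

/-- `IsPrefixOf r s α λ` : the finite path `α` is an initial segment of the finite path `λ`
(equivalently, `λ = α β` for some finite path `β`). -/
def IsPrefixOf (r s : E → V) : FinPaths r s → FinPaths r s → Prop
  | Sum.inl v, q => v = finRng r s q
  | Sum.inr _, Sum.inl _ => False
  | Sum.inr a, Sum.inr b =>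
      ∃ h : a.1 ≤ b.1, ∀ j : Fin (a.1 + 1), a.2.1 j = b.2.1 (Fin.castLE (by omega) j)

/-- `K ⊆ E^*` is exhaustive for `W ⊆ E^0`. -/
def Exhaustive (r s : E → V) (K : Set (FinPaths r s)) (W : Set V) : Prop :=
  K ⊆ finRng r s ⁻¹' W ∧
    ∀ q : FinPaths r s, finRng r s q ∈ W →
      ∃ a ∈ K, IsPrefixOf r s a q ∨ IsPrefixOf r s q a

/-- The segment `μ_{m+1} ⋯ μ_{m+1+j}` (0-indexed: edges `m, …, m+j`) of an infinite path. -/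
def infSeg (r s : E → V) (μ : InfPaths r s) (m j : ℕ) : FinPaths r s :=
  Sum.inr ⟨j, ⟨fun i => μ.1 (m + i.1), fun i _ => μ.2 (m + i)⟩⟩

/-- The segment with edges `m, …, m+j` (0-indexed) of a finite path of length `n+1`. -/
def finSeg (r s : E → V) {n : ℕ} (a : PathSpace r s (n + 1)) (m j : ℕ)
    (hmj : m + j ≤ n) : FinPaths r s :=
  Sum.inr ⟨j, ⟨fun i => a.1 ⟨m + i.1, by have := i.isLt; omega⟩,
    fun i h => a.2 (m + i) (by omega)⟩⟩

/-- Yeend's boundary-path condition for an infinite path. -/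
def YeendInf [TopologicalSpace V] [TopologicalSpace E] (r s : E → V)
    (μ : InfPaths r s) : Prop :=
  ∀ (m : ℕ) (K : Set (FinPaths r s)), IsCompact K →
    finRng r s '' K ∈ nhds (r (μ.1 m)) →
    Exhaustive r s K (finRng r s '' K) →
    (Sum.inl (r (μ.1 m)) ∈ K ∨ ∃ j : ℕ, infSeg r s μ m j ∈ K)

/-- Yeend's boundary-path condition for a finite path. -/
def YeendFin [TopologicalSpace V] [TopologicalSpace E] (r s : E → V)
    (μ : FinPaths r s) : Prop :=
  (∀ x : Σ n : ℕ, PathSpace r s (n + 1), μ = Sum.inr x →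
    ∀ (m : ℕ) (hm : m ≤ x.1) (K : Set (FinPaths r s)), IsCompact K →
      finRng r s '' K ∈ nhds (r (x.2.1 ⟨m, by omega⟩)) →
      Exhaustive r s K (finRng r s '' K) →
      (Sum.inl (r (x.2.1 ⟨m, by omega⟩)) ∈ K ∨
        ∃ (j : ℕ) (hj : m + j ≤ x.1), finSeg r s x.2 m j hj ∈ K)) ∧
  (∀ K : Set (FinPaths r s), IsCompact K →
    finRng r s '' K ∈ nhds (finSrc r s μ) →
    Exhaustive r s K (finRng r s '' K) →
    Sum.inl (finSrc r s μ) ∈ K)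



section Aux

variable [TopologicalSpace V] [TopologicalSpace E] {r s : E → V}

/-- A single edge viewed as a finite path of length 1. -/
def onePath (r s : E → V) (e : E) : FinPaths r s :=
  Sum.inr ⟨0, ⟨fun _ => e, fun i h => by omega⟩⟩

lemma continuous_onePath : Continuous (onePath r s) := by
  apply continuous_inr.comp
  apply (continuous_sigmaMk (σ := fun n => PathSpace r s (n + 1))).comp
  exact Continuous.subtype_mk (continuous_pi fun _ => continuous_id) _

lemma continuous_finRng (hr : Continuous r) : Continuous (finRng r s) := by
  refine continuous_sumElim.2 ⟨continuous_id, continuous_sigma fun n => ?_⟩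
  exact hr.comp ((continuous_apply (0 : Fin (n+1))).comp continuous_subtype_val)

/-- The edge in position `L` of a finite path (junk value `Sum.inr ()` if too short). -/
def edgeAt (r s : E → V) (L : ℕ) : FinPaths r s → E ⊕ Unit :=
  Sum.elim (fun _ => Sum.inr ()) fun x =>
    if h : L ≤ x.1 then Sum.inl (x.2.1 ⟨L, by omega⟩) else Sum.inr ()

lemma continuous_edgeAt (L : ℕ) : Continuous (edgeAt r s L) := by
  refine continuous_sumElim.2 ⟨continuous_const, continuous_sigma fun n => ?_⟩
  by_cases h : L ≤ n
  · simp only [edgeAt, dif_pos h]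
    exact continuous_inl.comp ((continuous_apply ((⟨L, by omega⟩ : Fin (n+1)))).comp continuous_subtype_val)
  · simp only [edgeAt, dif_neg h]
    exact continuous_const

lemma isCompact_edgeSet (L : ℕ) {K : Set (FinPaths r s)} (hK : IsCompact K) :
    IsCompact {e : E | Sum.inl e ∈ edgeAt r s L '' K} := by
  have h1 : IsCompact (edgeAt r s L '' K) := hK.image (continuous_edgeAt L)
  exact Topology.IsClosedEmbedding.inl.isCompact_preimage h1

lemma mem_Vrg_of_aux [T2Space V] [LocallyCompactSpace V]
    {N : Set V} {v : V} {C : Set E} (hr : Continuous r) (hN : IsOpen N) (hv : v ∈ N)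
    (hNr : N ⊆ Set.range r) (hC : IsCompact C) (hpre : r ⁻¹' N ⊆ C) :
    v ∈ Vrg r := by
  constructor
  · obtain ⟨Kc, hKc, hvi, hKN⟩ := exists_compact_subset hN hv
    refine ⟨interior Kc, isOpen_interior, hvi, ?_⟩
    have hcl : closure (interior Kc) ⊆ N :=
      (closure_minimal interior_subset hKc.isClosed).trans hKN
    exact hC.of_isClosed_subset (isClosed_closure.preimage hr)
      fun e he => hpre (hcl he)
  · intro hvcl
    obtain ⟨w, hwN, hwsce⟩ := mem_closure_iff.1 hvcl N hN hv
    exact hwsce (subset_closure (hNr hwN))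

lemma perturb (hr : Continuous r) (hs : IsLocalHomeomorph s) :
    ∀ (L : ℕ) (q : Fin (L + 1) → E), IsPath r s q →
    ∃ (N : Set V) (Q : V → Fin (L + 1) → E),
      IsOpen N ∧ s (q (Fin.last L)) ∈ N ∧
      (∀ i, ContinuousOn (fun w => Q w i) N) ∧
      (∀ w, IsPath r s (Q w)) ∧
      (∀ w ∈ N, s (Q w (Fin.last L)) = w) ∧
      Q (s (q (Fin.last L))) = q := by
  intro L
  induction L with
  | zero =>
    intro q hq
    obtain ⟨φ, hφ, hsφ⟩ := hs (q (Fin.last 0))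
    refine ⟨φ.target, fun w _ => φ.symm w, φ.open_target, ?_, ?_, ?_, ?_, ?_⟩
    · rw [hsφ]; exact φ.map_source hφ
    · intro i; exact φ.symm.continuousOn
    · intro w i h; omega
    · intro w hw; rw [hsφ]; exact φ.right_inv hw
    · funext i
      have h0 : i = Fin.last 0 := by apply Fin.ext; omega
      rw [h0, hsφ]
      exact φ.left_inv hφ
  | succ L ih =>
    intro q hq
    set tail : Fin (L + 1) → E := fun i => q i.succ with htail
    have htp : IsPath r s tail := fun i h => hq (i + 1) (by omega)
    obtain ⟨N, Q, hNo, hvN, hQc, hQp, hQs, hQv⟩ := ih tail htp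
    obtain ⟨φ, hφ, hsφ⟩ := hs (q 0)
    classical
    have hgc : ContinuousOn (fun w => r (Q w 0)) N := hr.comp_continuousOn (hQc 0)
    set N' := N ∩ (fun w => r (Q w 0)) ⁻¹' φ.target with hN'
    have hN'o : IsOpen N' := hgc.isOpen_inter_preimage hNo φ.open_target
    set Q' : V → Fin (L + 2) → E := fun w =>
      if hw : w ∈ N' then Fin.cons (φ.symm (r (Q w 0))) (Q w) else q with hQ'
    have hlast : tail (Fin.last L) = q (Fin.last (L + 1)) := by
      rw [htail]
      show q (Fin.last L).succ = q (Fin.last (L + 1))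
      rw [Fin.succ_last]
    have hQvv : Q (s (q (Fin.last (L + 1)))) = tail := by rw [← hlast]; exact hQv
    have h01 : r (tail 0) = s (q 0) := by
      have h00 := hq 0 (by omega)
      have e0 : (⟨0, by omega⟩ : Fin (L + 2)) = 0 := Fin.ext (by simp)
      have e1 : (⟨0 + 1, by omega⟩ : Fin (L + 2)) = Fin.succ 0 := by
        apply Fin.ext; simp
      rw [e0, e1] at h00
      exact h00.symm
    have hv0N' : s (q (Fin.last (L + 1))) ∈ N' := by
      constructor
      · rw [← hlast]; exact hvN
      · show r (Q (s (q (Fin.last (L + 1)))) 0) ∈ φ.target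
        rw [hQvv, h01, hsφ]
        exact φ.map_source hφ
    refine ⟨N', Q', hN'o, hv0N', ?_, ?_, ?_, ?_⟩
    · intro i
      have hcont : ContinuousOn
          (fun w => (Fin.cons (φ.symm (r (Q w 0))) (Q w) : Fin (L + 2) → E) i) N' := ?_
      · exact ContinuousOn.congr hcont fun w hw => by simp only [hQ', dif_pos hw]
      induction i using Fin.cases with
      | zero =>
        simp only [Fin.cons_zero]
        exact φ.symm.continuousOn.comp (hgc.mono Set.inter_subset_left)
          fun w hw => hw.2
      | succ j =>
        simp only [Fin.cons_succ]
        exact (hQc j).mono Set.inter_subset_left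
    · intro w i h
      by_cases hw : w ∈ N'
      · simp only [hQ', dif_pos hw]
        rcases Nat.eq_zero_or_pos i with hi | hi
        · subst hi
          have e0 : (⟨0, by omega⟩ : Fin (L + 2)) = 0 := Fin.ext (by simp)
          have e1 : (⟨0 + 1, h⟩ : Fin (L + 2)) = Fin.succ 0 := by
            apply Fin.ext; simp
          rw [e0, e1, Fin.cons_zero, Fin.cons_succ, hsφ, φ.right_inv hw.2]
        · obtain ⟨i', rfl⟩ : ∃ i', i = i' + 1 := ⟨i - 1, by omega⟩
          have e0 : (⟨i' + 1, by omega⟩ : Fin (L + 2)) =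
              Fin.succ ⟨i', by omega⟩ := rfl
          have e1 : (⟨i' + 1 + 1, h⟩ : Fin (L + 2)) =
              Fin.succ ⟨i' + 1, by omega⟩ := rfl
          rw [e0, e1, Fin.cons_succ, Fin.cons_succ]
          exact hQp w i' (by omega)
      · simp only [hQ', dif_neg hw]
        exact hq i h
    · intro w hw
      simp only [hQ', dif_pos hw]
      have e : Fin.last (L + 1) = Fin.succ (Fin.last L) := rfl
      rw [e, Fin.cons_succ]
      exact hQs w hw.1
    · simp only [hQ', dif_pos hv0N']
      rw [hQvv]
      funext i
      induction i using Fin.cases with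
      | zero =>
        rw [Fin.cons_zero, h01, hsφ]
        exact φ.left_inv hφ
      | succ j =>
        rw [Fin.cons_succ, htail]

variable [T2Space V] [LocallyCompactSpace V] [T2Space E]

lemma singular_cond2 (hr : Continuous r) {v : V} (hv : v ∈ Vsg r)
    (K : Set (FinPaths r s)) (hK : IsCompact K)
    (hnhds : finRng r s '' K ∈ nhds v)
    (hex : Exhaustive r s K (finRng r s '' K)) :
    Sum.inl v ∈ K := by
  by_contra hvK
  apply hv
  have hK0 : IsCompact (Sum.inl ⁻¹' K : Set V) :=
    Topology.IsClosedEmbedding.inl.isCompact_preimage hK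
  set W := interior (finRng r s '' K) with hW
  set N := W \ Sum.inl ⁻¹' K with hN
  have hNo : IsOpen N := isOpen_interior.sdiff hK0.isClosed
  have hvN : v ∈ N := ⟨mem_interior_iff_mem_nhds.2 hnhds, hvK⟩
  have hNr : N ⊆ Set.range r := by
    rintro w ⟨hw1, hw2⟩
    obtain ⟨a, haK, ha⟩ := interior_subset hw1
    rcases a with u | x
    · have hu : u = w := ha
      exact absurd (show Sum.inl w ∈ K by rwa [hu] at haK) hw2
    · exact ⟨x.2.1 0, ha⟩
  refine mem_Vrg_of_aux hr hNo hvN hNr (isCompact_edgeSet 0 hK) ?_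
  intro f hf
  have hmem : finRng r s (onePath r s f) ∈ finRng r s '' K :=
    interior_subset hf.1
  obtain ⟨a, haK, hcomp | hcomp⟩ := hex.2 (onePath r s f) hmem
  · rcases a with u | b
    · have hu : u = r f := hcomp
      exact absurd (show Sum.inl (r f) ∈ K by rwa [hu] at haK) hf.2
    · obtain ⟨hb, hedges⟩ := hcomp
      exact ⟨Sum.inr b, haK, by
        simp only [edgeAt, Sum.elim_inr, dif_pos (Nat.zero_le b.1)]
        exact congrArg Sum.inl (hedges ⟨0, Nat.succ_pos _⟩)⟩
  · rcases a with u | b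
    · exact hcomp.elim
    · obtain ⟨hb, hedges⟩ := hcomp
      exact ⟨Sum.inr b, haK, by
        simp only [edgeAt, Sum.elim_inr, dif_pos (Nat.zero_le b.1)]
        exact congrArg Sum.inl (hedges ⟨0, Nat.one_pos⟩).symm⟩

lemma singular_cond1 (hr : Continuous r) (hs : IsLocalHomeomorph s)
    (x : Σ n : ℕ, PathSpace r s (n + 1)) {m : ℕ} (hm : m ≤ x.1)
    (hv : s (x.2.1 (Fin.last x.1)) ∈ Vsg r)
    (K : Set (FinPaths r s)) (hK : IsCompact K)
    (hnhds : finRng r s '' K ∈ nhds (r (x.2.1 ⟨m, by omega⟩)))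
    (hex : Exhaustive r s K (finRng r s '' K)) :
    Sum.inl (r (x.2.1 ⟨m, by omega⟩)) ∈ K ∨
      ∃ (j : ℕ) (hj : m + j ≤ x.1), finSeg r s x.2 m j hj ∈ K := by
  by_contra hcon
  push_neg at hcon
  obtain ⟨h1, h2⟩ := hcon
  apply hv
  set L := x.1 - m with hLdef
  have hmL : m + L = x.1 := by omega
  set q : Fin (L + 1) → E := fun i => x.2.1 ⟨m + i.1, by have := i.isLt; omega⟩
    with hqdef
  have hq : IsPath r s q := by
    intro i h
    exact x.2.2 (m + i) (by omega)
  have hqlast : q (Fin.last L) = x.2.1 (Fin.last x.1) := by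
    show x.2.1 ⟨m + L, by omega⟩ = x.2.1 (Fin.last x.1)
    exact congrArg x.2.1 (Fin.ext hmL)
  obtain ⟨N₀, Q, hN₀o, hvN₀, hQc, hQp, hQs, hQv⟩ := perturb hr hs L q hq
  rw [hqlast] at hvN₀ hQv
  set v := s (x.2.1 (Fin.last x.1)) with hvdef
  have hq0 : q 0 = x.2.1 ⟨m, by omega⟩ := by
    simp only [hqdef]
    exact congrArg x.2.1 (Fin.ext (by simp))
  set W := interior (finRng r s '' K) with hWdef
  have hWo : IsOpen W := isOpen_interior
  have hgc : ContinuousOn (fun w => r (Q w 0)) N₀ := hr.comp_continuousOn (hQc 0)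
  set N₁ := N₀ ∩ (fun w => r (Q w 0)) ⁻¹' W with hN₁def
  have hN₁o : IsOpen N₁ := hgc.isOpen_inter_preimage hN₀o hWo
  have hvW : r (Q v 0) ∈ W := by
    rw [hQv, hq0]
    exact mem_interior_iff_mem_nhds.2 hnhds
  have hvN₁ : v ∈ N₁ := ⟨hvN₀, hvW⟩
  classical
  set seg : ℕ → V → FinPaths r s := fun j w =>
    if hj : j ≤ L then
      Sum.inr ⟨j, ⟨fun i => Q w ⟨i.1, by have := i.isLt; omega⟩,
        fun i h => hQp w i (by omega)⟩⟩
    else Sum.inl w with hsegdef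
  have hsegc : ∀ j, j ≤ L → ContinuousOn (seg j) N₀ := by
    intro j hj
    have hbase : ContinuousOn (fun w => (Sum.inr
        ⟨j, ⟨fun i : Fin (j + 1) => Q w ⟨i.1, by have := i.isLt; omega⟩,
          fun i h => hQp w i (by omega)⟩⟩ : FinPaths r s)) N₀ := by
      apply Continuous.comp_continuousOn
        (continuous_inr.comp (continuous_sigmaMk (σ := fun n => PathSpace r s (n + 1))))
      refine (Topology.IsInducing.subtypeVal.continuousOn_iff).2 ?_
      exact continuousOn_pi.2 fun i => hQc _
    refine hbase.congr fun w hw => ?_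
    simp only [hsegdef, dif_pos hj]
  have hKcl : IsClosed K := hK.isClosed
  set Bad : Set V :=
    ((fun w => (Sum.inl (r (Q w 0)) : FinPaths r s)) ⁻¹' K) ∪
      ⋃ j : Fin (L + 1), seg j.1 ⁻¹' K with hBaddef
  set N₂ := N₁ \ Bad with hN₂def
  have hN₂o : IsOpen N₂ := by
    have he : N₂ = (N₁ ∩ (fun w => (Sum.inl (r (Q w 0)) : FinPaths r s)) ⁻¹' Kᶜ) ∩
        ⋂ j : Fin (L + 1), (N₁ ∩ seg j.1 ⁻¹' Kᶜ) := by
      ext w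
      constructor
      · rintro ⟨hw1, hw2⟩
        exact ⟨⟨hw1, fun hk => hw2 (Or.inl hk)⟩, Set.mem_iInter.2 fun j =>
          ⟨hw1, fun hk => hw2 (Or.inr (Set.mem_iUnion.2 ⟨j, hk⟩))⟩⟩
      · rintro ⟨⟨hw1, hA⟩, hB⟩
        refine ⟨hw1, fun hbad => ?_⟩
        rcases hbad with hk | hk
        · exact hA hk
        · obtain ⟨j, hj⟩ := Set.mem_iUnion.1 hk
          exact (Set.mem_iInter.1 hB j).2 hj
    rw [he]
    refine IsOpen.inter ?_ (isOpen_iInter_of_finite fun j => ?_)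
    · exact ContinuousOn.isOpen_inter_preimage
        (continuous_inl.comp_continuousOn (hgc.mono Set.inter_subset_left))
        hN₁o hKcl.isOpen_compl
    · exact ContinuousOn.isOpen_inter_preimage
        ((hsegc j.1 (by omega)).mono Set.inter_subset_left) hN₁o hKcl.isOpen_compl
  have hsegv : ∀ (j : ℕ) (hj : j ≤ L), seg j v = finSeg r s x.2 m j (by omega) := by
    intro j hj
    simp only [hsegdef, dif_pos hj]
    refine congrArg Sum.inr (congrArg (Sigma.mk j) (Subtype.ext (funext fun i => ?_)))
    show Q v ⟨i.1, by have := i.isLt; omega⟩ = x.2.1 ⟨m + i.1, by have := i.isLt; omega⟩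
    rw [hQv]
  have hvBad : v ∉ Bad := by
    simp only [hBaddef, Set.mem_union, Set.mem_iUnion, Set.mem_preimage, not_or,
      not_exists]
    constructor
    · rw [hQv, hq0]
      exact h1
    · intro j hj
      rw [hsegv j.1 (by omega)] at hj
      exact h2 j.1 (by omega) hj
  have hvN₂ : v ∈ N₂ := ⟨hvN₁, hvBad⟩
  -- membership in Bad helpers
  have hBad1 : ∀ w, Sum.inl (r (Q w 0)) ∈ K → w ∈ Bad := by
    intro w hw
    simp only [hBaddef, Set.mem_union, Set.mem_preimage]
    exact Or.inl hw
  have hBad2 : ∀ (w : V) (n : ℕ), n ≤ L → seg n w ∈ K → w ∈ Bad := by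
    intro w n hn hw
    simp only [hBaddef, Set.mem_union, Set.mem_iUnion, Set.mem_preimage]
    exact Or.inr ⟨⟨n, by omega⟩, hw⟩
  -- probes
  have hNr : N₂ ⊆ Set.range r := by
    intro w hw
    have hwN₀ : w ∈ N₀ := hw.1.1
    have hmem : finRng r s (Sum.inr ⟨L, ⟨Q w, hQp w⟩⟩) ∈ finRng r s '' K :=
      interior_subset hw.1.2
    obtain ⟨a, haK, hcomp | hcomp⟩ := hex.2 (Sum.inr ⟨L, ⟨Q w, hQp w⟩⟩) hmem
    · exfalso
      rcases a with u | ⟨n, bp⟩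
      · have hu : u = r (Q w 0) := hcomp
        exact hw.2 (hBad1 w (hu ▸ haK))
      · obtain ⟨hb, hedges⟩ := hcomp
        have hbL : n ≤ L := hb
        have hseg : seg n w = Sum.inr ⟨n, bp⟩ := by
          simp only [hsegdef, dif_pos hbL]
          exact congrArg Sum.inr (congrArg (Sigma.mk n)
            (Subtype.ext (funext fun i => (hedges i).symm)))
        exact hw.2 (hBad2 w n hbL (hseg ▸ haK))
    · rcases a with u | ⟨n, bp⟩
      · exact hcomp.elim
      · obtain ⟨hb, hedges⟩ := hcomp
        have hbL : L ≤ n := hb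
        by_cases hbn : n = L
        · exfalso
          subst hbn
          have hseg : seg L w = Sum.inr ⟨L, bp⟩ := by
            simp only [hsegdef, dif_pos (le_refl L)]
            exact congrArg Sum.inr (congrArg (Sigma.mk L)
              (Subtype.ext (funext fun i => hedges i)))
          exact hw.2 (hBad2 w L le_rfl (hseg ▸ haK))
        · refine ⟨bp.1 ⟨L + 1, by omega⟩, ?_⟩
          have hpath := bp.2 L (by omega)
          have hQlast := hQs w hwN₀
          have hel : bp.1 ⟨L, by omega⟩ = Q w (Fin.last L) := (hedges (Fin.last L)).symm
          rw [hel, hQlast] at hpath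
          exact hpath.symm
  refine mem_Vrg_of_aux hr hN₂o hvN₂ hNr (isCompact_edgeSet (L + 1) hK) ?_
  intro f hf
  have hfN₀ : r f ∈ N₀ := hf.1.1
  have hsQ : s (Q (r f) (Fin.last L)) = r f := hQs _ hfN₀
  set P : Fin (L + 2) → E := Fin.snoc (Q (r f)) f with hPdef
  have hPpath : IsPath r s P := by
    intro i h
    by_cases hi : i + 1 < L + 1
    · have e0 : (⟨i, by omega⟩ : Fin (L + 2)) = Fin.castSucc ⟨i, by omega⟩ := rfl
      have e1 : (⟨i + 1, h⟩ : Fin (L + 2)) = Fin.castSucc ⟨i + 1, hi⟩ := rfl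
      rw [hPdef, e0, e1, Fin.snoc_castSucc, Fin.snoc_castSucc]
      exact hQp (r f) i hi
    · have hi1 : i = L := by omega
      subst hi1
      have e0 : (⟨L, by omega⟩ : Fin (L + 2)) = Fin.castSucc (Fin.last L) := rfl
      have e1 : (⟨L + 1, h⟩ : Fin (L + 2)) = Fin.last (L + 1) := rfl
      rw [hPdef, e0, e1, Fin.snoc_castSucc, Fin.snoc_last]
      exact hsQ
  have hP0 : P 0 = Q (r f) 0 := by
    have e0 : (0 : Fin (L + 2)) = Fin.castSucc 0 := by
      apply Fin.ext; simp
    rw [hPdef, e0, Fin.snoc_castSucc]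
  have hPc : ∀ k : Fin (L + 1), P (Fin.castSucc k) = Q (r f) k := by
    intro k
    rw [hPdef, Fin.snoc_castSucc]
  have hPl : P (Fin.last (L + 1)) = f := by
    rw [hPdef, Fin.snoc_last]
  have hPW : finRng r s (Sum.inr ⟨L + 1, ⟨P, hPpath⟩⟩) ∈ finRng r s '' K := by
    show r (P 0) ∈ finRng r s '' K
    rw [hP0]
    exact interior_subset hf.1.2
  obtain ⟨a, haK, hcomp | hcomp⟩ := hex.2 (Sum.inr ⟨L + 1, ⟨P, hPpath⟩⟩) hPW
  · rcases a with u | ⟨n, bp⟩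
    · exfalso
      have hu : u = r (P 0) := hcomp
      rw [hP0] at hu
      exact hf.2 (hBad1 (r f) (hu ▸ haK))
    · obtain ⟨hb, hedges⟩ := hcomp
      have hbL : n ≤ L + 1 := hb
      by_cases hbn : n ≤ L
      · exfalso
        have hseg : seg n (r f) = Sum.inr ⟨n, bp⟩ := by
          simp only [hsegdef, dif_pos hbn]
          refine congrArg Sum.inr (congrArg (Sigma.mk n)
            (Subtype.ext (funext fun i => ?_)))
          have hi : bp.1 i = P (Fin.castSucc ⟨i.1, by have := i.isLt; omega⟩) :=
            hedges i
          rw [hPc] at hi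
          exact hi.symm
        exact hf.2 (hBad2 (r f) n hbn (hseg ▸ haK))
      · have hbn1 : n = L + 1 := by omega
        subst hbn1
        have hi : bp.1 ⟨L + 1, by omega⟩ = P (Fin.last (L + 1)) :=
          hedges ⟨L + 1, by show L + 1 < L + 1 + 1; omega⟩
        rw [hPl] at hi
        show Sum.inl f ∈ edgeAt r s (L + 1) '' K
        refine ⟨Sum.inr ⟨L + 1, bp⟩, haK, ?_⟩
        simp only [edgeAt, Sum.elim_inr, dif_pos (le_refl (L + 1))]
        exact congrArg Sum.inl hi
  · rcases a with u | ⟨n, bp⟩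
    · exact hcomp.elim
    · obtain ⟨hb, hedges⟩ := hcomp
      have hbL : L + 1 ≤ n := hb
      have hi : P (Fin.last (L + 1)) = bp.1 ⟨L + 1, by omega⟩ :=
        hedges ⟨L + 1, by show L + 1 < L + 1 + 1; omega⟩
      rw [hPl] at hi
      show Sum.inl f ∈ edgeAt r s (L + 1) '' K
      refine ⟨Sum.inr ⟨n, bp⟩, haK, ?_⟩
      simp only [edgeAt, Sum.elim_inr, dif_pos (show L + 1 ≤ n by omega)]
      exact congrArg Sum.inl hi.symm

lemma regular_not_yeend (hr : Continuous r) {v : V} (hv : v ∈ Vrg r) :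
    ∃ K : Set (FinPaths r s), IsCompact K ∧ finRng r s '' K ∈ nhds v ∧
      Exhaustive r s K (finRng r s '' K) ∧ Sum.inl v ∉ K := by
  obtain ⟨⟨N₁, hN₁o, hvN₁, hN₁c⟩, hvsce⟩ := hv
  rw [mem_closure_iff] at hvsce
  push_neg at hvsce
  obtain ⟨N₂, hN₂o, hvN₂, hN₂d⟩ := hvsce
  set U := N₁ ∩ N₂ with hU
  have hUo : IsOpen U := hN₁o.inter hN₂o
  have hvU : v ∈ U := ⟨hvN₁, hvN₂⟩
  have hUcr : U ⊆ closure (Set.range r) := by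
    intro w hw
    by_contra h
    exact Set.eq_empty_iff_forall_notMem.mp hN₂d w ⟨hw.2, h⟩
  have hpc : IsCompact (r ⁻¹' closure U) :=
    hN₁c.of_isClosed_subset (isClosed_closure.preimage hr)
      (Set.preimage_mono (closure_mono Set.inter_subset_left))
  set K : Set (FinPaths r s) := onePath r s '' (r ⁻¹' closure U) with hK
  have hKc : IsCompact K := hpc.image continuous_onePath
  have hsub : U ⊆ finRng r s '' K := by
    have hclosed : IsClosed (finRng r s '' K) :=
      (hKc.image (continuous_finRng hr)).isClosed
    have h1 : U ∩ Set.range r ⊆ finRng r s '' K := by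
      rintro w ⟨hwU, e, rfl⟩
      exact ⟨onePath r s e, ⟨e, subset_closure hwU, rfl⟩, rfl⟩
    have h2 : U ⊆ closure (U ∩ Set.range r) := by
      intro w hw
      rw [mem_closure_iff]
      intro o ho hwo
      obtain ⟨z, hz1, hz2⟩ :=
        mem_closure_iff.1 (hUcr hw) (o ∩ U) (ho.inter hUo) ⟨hwo, hw⟩
      exact ⟨z, hz1.1, hz1.2, hz2⟩
    exact fun w hw => closure_minimal h1 hclosed (h2 hw)
  have hclU : ∀ a ∈ K, finRng r s a ∈ closure U := by
    rintro a ⟨e, heU, rfl⟩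
    exact heU
  refine ⟨K, hKc, Filter.mem_of_superset (hUo.mem_nhds hvU) hsub,
    ⟨fun a ha => Set.mem_image_of_mem _ ha, ?_⟩, ?_⟩
  · intro q hq
    have hqcl : finRng r s q ∈ closure U := by
      obtain ⟨a, haK, ha⟩ := hq
      rw [← ha]
      exact hclU a haK
    rcases q with w | x
    · obtain ⟨a, haK, ha⟩ := hq
      exact ⟨a, haK, Or.inr (show (w : V) = finRng r s a from ha.symm)⟩
    · refine ⟨onePath r s (x.2.1 0), ⟨x.2.1 0, hqcl, rfl⟩, Or.inl ?_⟩
      refine ⟨Nat.zero_le _, fun j => ?_⟩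
      show x.2.1 0 = x.2.1 (Fin.castLE (Nat.succ_le_succ (Nat.zero_le _)) j)
      have hj : Fin.castLE (Nat.succ_le_succ (Nat.zero_le x.1)) j = (0 : Fin (x.1 + 1)) := by
        apply Fin.ext
        simp only [Fin.coe_castLE, Fin.val_zero]
        have hjlt : j.1 < 0 + 1 := j.isLt
        omega
      rw [hj]
  · rintro ⟨e, _, heq⟩
    simp [onePath] at heq

end Aux

/-- A finite path `μ ∈ E^*` satisfies `s(μ) ∈ E^0_sg` (i.e. `μ ∈ ∂E`)
if and only if `μ` is a Yeend boundary path. -/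
theorem finite_boundary_iff_yeend
    [TopologicalSpace V] [TopologicalSpace E]
    [LocallyCompactSpace V] [T2Space V] [LocallyCompactSpace E] [T2Space E]
    (r s : E → V) (hr : Continuous r) (hs : IsLocalHomeomorph s)
    (μ : FinPaths r s) :
    finSrc r s μ ∈ Vsg r ↔ YeendFin r s μ := by
  constructor
  · intro hv
    refine ⟨?_, ?_⟩
    · intro x hx m hm K hK hn hex
      refine singular_cond1 hr hs x hm ?_ K hK hn hex
      rwa [hx] at hv
    · intro K hK hn hex
      exact singular_cond2 hr hv K hK hn hex
  · intro hY
    by_contra hns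
    have hvr : finSrc r s μ ∈ Vrg r := not_not.1 hns
    obtain ⟨K, hK, hn, hex, hvK⟩ := regular_not_yeend hr hvr
    exact hvK (hY.2 K hK hn hex)

end TopGraphPaper
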